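/- The real number e (Euler's number, the base of the natural exponential function) is transcendental over the rationals: there is no nonzero polynomial with integer coefficients having e as a root. -/

import Mathlib

open Polynomial Finset
open scoped Nat

lemma sumIDeriv_mvt (f : ℝ[X]) {x : ℝ} (hx : 0 < x) :
    ∃ c ∈ Set.Ioo 0 x,
      (sumIDeriv f).eval x - Real.exp x * (sumIDeriv f).eval 0
        = -(x * Real.exp (x - c) * f.eval c) := by
  set F := sumIDeriv f with hF
  have hdF : derivative F = F - f := by
    have h := sumIDeriv_eq_self_add f
    rw [← hF] at h
    rw [eq_sub_iff_add_eq, add_comm, ← h]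
  have hFd : ∀ t : ℝ, HasDerivAt (fun t => Real.exp (-t) * F.eval t)
      (-(Real.exp (-t) * f.eval t)) t := by
    intro t
    have h1 : HasDerivAt (fun t : ℝ => Real.exp (-t)) (-Real.exp (-t)) t := by
      simpa using ((hasDerivAt_id t).neg).exp
    have h3 := h1.mul (F.hasDerivAt t)
    refine h3.congr_deriv ?_
    rw [hdF]
    simp [eval_sub]
    ring
  obtain ⟨c, hc, hc'⟩ := exists_hasDerivAt_eq_slope (fun t => Real.exp (-t) * F.eval t)
    (fun t => -(Real.exp (-t) * f.eval t)) hx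
    (fun t _ => (hFd t).continuousAt.continuousWithinAt) (fun t ht => hFd t)
  refine ⟨c, hc, ?_⟩
  rw [sub_zero, eq_div_iff (ne_of_gt hx)] at hc'
  have hmul := congrArg (fun y => Real.exp x * y) hc'
  simp only [mul_sub] at hmul
  have e1 : Real.exp x * (Real.exp (-x) * F.eval x) = F.eval x := by
    rw [← mul_assoc, ← Real.exp_add]; simp
  have e2 : Real.exp x * (Real.exp (-0) * F.eval 0) = Real.exp x * F.eval 0 := by
    simp
  rw [e1, e2] at hmul
  rw [← hmul]
  have e3 : Real.exp x * Real.exp (-c) = Real.exp (x - c) := by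
    rw [← Real.exp_add]; ring_nf
  calc Real.exp x * (-(Real.exp (-c) * eval c f) * x)
      = -(x * (Real.exp x * Real.exp (-c)) * eval c f) := by ring
    _ = -(x * Real.exp (x - c) * eval c f) := by rw [e3]


noncomputable def fpoly (n q : ℕ) : ℤ[X] :=
  X ^ (q - 1) * ∏ j ∈ Icc 1 n, (X - C (j : ℤ)) ^ q

lemma map_id_int (p : ℤ[X]) : p.map (algebraMap ℤ ℤ) = p := by
  have : algebraMap ℤ ℤ = RingHom.id ℤ := by ext x; simp
  rw [this, Polynomial.map_id]

lemma aeval_int (p : ℤ[X]) (r : ℤ) : aeval r p = p.eval r := by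
  rw [aeval_def, eval₂_eq_eval_map, map_id_int]

lemma keyInt (n : ℕ) (a : ℕ → ℤ) (q : ℕ) (hq : q.Prime)
    (hqn : n < q) (hqa : (a 0).natAbs < q) (ha0 : a 0 ≠ 0) :
    ((q - 1)! : ℤ) ≤ |∑ i ∈ range (n + 1), a i * (sumIDeriv (fpoly n q)).eval (i : ℤ)| := by
  have hq0 : 0 < q := hq.pos
  have hqZ : Prime (q : ℤ) := Nat.prime_iff_prime_int.mp hq
  -- factorization at i ∈ Icc 1 n
  obtain ⟨g, -, hg⟩ := aeval_sumIDeriv (A := ℤ) (fpoly n q) q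
  obtain ⟨g0, -, hg0⟩ := aeval_sumIDeriv_of_pos (A := ℤ) (fpoly n q) hq0
    (fun x y h => by exact_mod_cast h)
  have hFi : ∀ i ∈ Icc 1 n, (sumIDeriv (fpoly n q)).eval (i : ℤ) = (q ! : ℤ) * g.eval (i : ℤ) := by
    intro i hi
    have hfact : (fpoly n q).map (algebraMap ℤ ℤ) =
        (X - C (i : ℤ)) ^ q * (X ^ (q - 1) * ∏ j ∈ (Icc 1 n).erase i, (X - C (j : ℤ)) ^ q) := by
      rw [map_id_int, fpoly, ← Finset.mul_prod_erase _ _ hi]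
      ring
    have := hg (i : ℤ) (Dvd.intro _ hfact.symm)
    rw [aeval_int, aeval_int] at this
    rw [this, nsmul_eq_mul]
  have hF0 : (sumIDeriv (fpoly n q)).eval (0 : ℤ) =
      ((q - 1)! : ℤ) * (∏ j ∈ Icc 1 n, (-(j : ℤ)) ^ q) + (q ! : ℤ) * g0.eval 0 := by
    have hfact : (fpoly n q).map (algebraMap ℤ ℤ) =
        (X - C (0 : ℤ)) ^ (q - 1) * ∏ j ∈ Icc 1 n, (X - C (j : ℤ)) ^ q := by
      rw [map_id_int, fpoly]; simp
    have := hg0 (0 : ℤ) hfact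
    rw [aeval_int, aeval_int] at this
    rw [this, nsmul_eq_mul, nsmul_eq_mul, eval_prod]
    simp only [eval_pow, eval_sub, eval_X, eval_C, zero_sub]
  set s : ℤ := ∏ j ∈ Icc 1 n, (-(j : ℤ)) ^ q with hs
  set m : ℤ := a 0 * s + (q : ℤ) * (a 0 * g0.eval 0 + ∑ i ∈ range n, a (i + 1) * g.eval ((i : ℤ) + 1)) with hm
  have hK : ∑ i ∈ range (n + 1), a i * (sumIDeriv (fpoly n q)).eval (i : ℤ) = ((q - 1)! : ℤ) * m := by
    rw [Finset.sum_range_succ']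
    have hqfac : (q ! : ℤ) = (q : ℤ) * ((q - 1)! : ℤ) := by
      exact_mod_cast (Nat.mul_factorial_pred hq0.ne').symm
    rw [Nat.cast_zero, hF0]
    have hsum : ∀ i ∈ range n, a (i + 1) * (sumIDeriv (fpoly n q)).eval ((i : ℤ) + 1)
        = ((q - 1)! : ℤ) * ((q : ℤ) * (a (i + 1) * g.eval ((i : ℤ) + 1))) := by
      intro i hi
      have hmem : i + 1 ∈ Icc 1 n := by
        simp only [mem_Icc]; exact ⟨Nat.le_add_left 1 i, Nat.succ_le_of_lt (mem_range.mp hi)⟩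
      have := hFi (i + 1) hmem
      push_cast at this
      rw [this, hqfac]
      ring
    have hrw : ∑ i ∈ range n, a (i + 1) * (sumIDeriv (fpoly n q)).eval (((i + 1 : ℕ) : ℤ))
        = ((q - 1)! : ℤ) * ((q : ℤ) * ∑ i ∈ range n, a (i + 1) * g.eval ((i : ℤ) + 1)) := by
      rw [Finset.mul_sum, Finset.mul_sum]
      refine Finset.sum_congr rfl fun i hi => ?_
      push_cast
      exact hsum i hi
    rw [hrw, hm, hqfac]
    ring
  rw [hK]
  -- now show ¬ q ∣ m hence m ≠ 0
  have hndvd : ¬ (q : ℤ) ∣ m := by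
    intro hdvd
    have h1 : (q : ℤ) ∣ a 0 * s := by
      have h2 : (q : ℤ) ∣ (q : ℤ) * (a 0 * g0.eval 0 + ∑ i ∈ range n, a (i + 1) * g.eval ((i : ℤ) + 1)) :=
        Dvd.intro _ rfl
      have h3 := dvd_sub hdvd h2
      rw [hm] at h3
      simpa using h3
    rcases hqZ.dvd_mul.mp h1 with h | h
    · have : q ∣ (a 0).natAbs := Int.natCast_dvd.mp h
      exact absurd (Nat.le_of_dvd (Int.natAbs_pos.mpr ha0) this) (not_le.mpr hqa)
    · rw [hs] at h
      obtain ⟨j, hj, hdj⟩ := hqZ.exists_mem_finset_dvd h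
      have : (q : ℤ) ∣ (j : ℤ) := by
        have := hqZ.dvd_of_dvd_pow hdj
        rwa [dvd_neg] at this
      have hqj : q ∣ j := Int.ofNat_dvd.mp (by exact_mod_cast this)
      have hj1 : 1 ≤ j := (mem_Icc.mp hj).1
      have hjn : j ≤ n := (mem_Icc.mp hj).2
      have := Nat.le_of_dvd (by omega) hqj
      omega
  have hm0 : m ≠ 0 := fun h => hndvd (h ▸ dvd_zero _)
  calc ((q - 1)! : ℤ) = ((q - 1)! : ℤ) * 1 := by ring
    _ ≤ ((q - 1)! : ℤ) * |m| := by
        apply mul_le_mul_of_nonneg_left _ (by positivity)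
        exact Int.one_le_abs hm0
    _ = |((q - 1)! : ℤ) * m| := by
        rw [abs_mul, abs_of_nonneg (by positivity : (0:ℤ) ≤ ((q-1)! : ℤ))]



lemma fR_bound {n q : ℕ} (hn : 1 ≤ n) (hq : 1 ≤ q) {c : ℝ} (hc0 : 0 ≤ c) (hcn : c ≤ n) :
    |(((fpoly n q).map (Int.castRingHom ℝ)).eval c)| ≤ ((n : ℝ) ^ (n + 1)) ^ q := by
  have hn1 : (1 : ℝ) ≤ (n : ℝ) := by exact_mod_cast hn
  have heval : ((fpoly n q).map (Int.castRingHom ℝ)).eval c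
      = c ^ (q - 1) * ∏ j ∈ Icc 1 n, (c - (j : ℝ)) ^ q := by
    simp [fpoly, Polynomial.map_mul, Polynomial.map_pow, Polynomial.map_prod,
      Polynomial.map_sub, eval_prod]
  rw [heval]
  simp only [abs_mul, abs_prod, abs_pow]
  have h1 : |c| ^ (q - 1) ≤ (n : ℝ) ^ (q - 1) := by
    apply pow_le_pow_left₀ (abs_nonneg _)
    rw [abs_of_nonneg hc0]; exact hcn
  have h2 : ∏ j ∈ Icc 1 n, |c - (j : ℝ)| ^ q ≤ ∏ j ∈ Icc 1 n, (n : ℝ) ^ q := by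
    apply Finset.prod_le_prod (fun j _ => by positivity)
    intro j hj
    apply pow_le_pow_left₀ (abs_nonneg _)
    rw [abs_le]
    have hj1 : (1 : ℝ) ≤ (j : ℝ) := by exact_mod_cast (mem_Icc.mp hj).1
    have hjn : (j : ℝ) ≤ (n : ℝ) := by exact_mod_cast (mem_Icc.mp hj).2
    constructor <;> nlinarith
  calc |c| ^ (q - 1) * ∏ j ∈ Icc 1 n, |c - (j : ℝ)| ^ q
      ≤ (n : ℝ) ^ (q - 1) * ∏ j ∈ Icc 1 n, (n : ℝ) ^ q := by
        apply mul_le_mul h1 h2 (Finset.prod_nonneg fun j _ => by positivity) (by positivity)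
    _ = (n : ℝ) ^ (q - 1 + q * n) := by
        rw [Finset.prod_const, Nat.card_Icc, ← pow_mul, ← pow_add]
        norm_num
    _ ≤ (n : ℝ) ^ ((n + 1) * q) := by
        apply pow_le_pow_right₀ hn1
        have h : (n + 1) * q = q * n + q := by ring
        omega
    _ = ((n : ℝ) ^ (n + 1)) ^ q := by rw [pow_mul]

lemma keyReal (n : ℕ) (hn : 1 ≤ n) (a : ℕ → ℤ) (q : ℕ) (hq : 1 ≤ q)
    (hev : ∑ i ∈ range (n + 1), (a i : ℝ) * Real.exp 1 ^ i = 0) :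
    |((∑ i ∈ range (n + 1), a i * (sumIDeriv (fpoly n q)).eval (i : ℤ) : ℤ) : ℝ)| ≤
      ((∑ i ∈ range (n + 1), |(a i : ℝ)|) * ((n : ℝ) * Real.exp n)) * ((n : ℝ) ^ (n + 1)) ^ q := by
  set fR := (fpoly n q).map (Int.castRingHom ℝ) with hfR
  have hcast : ∀ z : ℤ, (((sumIDeriv (fpoly n q)).eval z : ℤ) : ℝ) = (sumIDeriv fR).eval ((z : ℤ) : ℝ) := by
    intro z
    rw [hfR, sumIDeriv_map, eval_intCast_map]
    rfl
  have hKR : ((∑ i ∈ range (n + 1), a i * (sumIDeriv (fpoly n q)).eval (i : ℤ) : ℤ) : ℝ)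
      = ∑ i ∈ range (n + 1), (a i : ℝ) *
          ((sumIDeriv fR).eval ((i : ℕ) : ℝ) - Real.exp 1 ^ i * (sumIDeriv fR).eval 0) := by
    push_cast
    simp only [hcast]
    push_cast
    rw [Finset.sum_congr rfl (fun i (_ : i ∈ range (n + 1)) => show
      (a i : ℝ) * ((sumIDeriv fR).eval ((i : ℕ) : ℝ) - Real.exp 1 ^ i * (sumIDeriv fR).eval 0)
        = (a i : ℝ) * (sumIDeriv fR).eval ((i : ℕ) : ℝ)
          - (sumIDeriv fR).eval 0 * ((a i : ℝ) * Real.exp 1 ^ i) from by ring),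
      Finset.sum_sub_distrib, ← Finset.mul_sum, hev, mul_zero, sub_zero]
  rw [hKR]
  have hterm : ∀ i ∈ range (n + 1),
      |(a i : ℝ) * ((sumIDeriv fR).eval ((i : ℕ) : ℝ) - Real.exp 1 ^ i * (sumIDeriv fR).eval 0)|
        ≤ |(a i : ℝ)| * ((n : ℝ) * Real.exp n * ((n : ℝ) ^ (n + 1)) ^ q) := by
    intro i hi
    rw [abs_mul]
    apply mul_le_mul_of_nonneg_left _ (abs_nonneg _)
    rcases Nat.eq_zero_or_pos i with rfl | hipos
    · simp only [Nat.cast_zero, pow_zero, one_mul, sub_self, abs_zero]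
      positivity
    · have hx : (0 : ℝ) < (i : ℕ) := by exact_mod_cast hipos
      obtain ⟨c, hc, heq⟩ := sumIDeriv_mvt fR hx
      rw [Real.exp_one_pow, heq, abs_neg, abs_mul, abs_mul]
      have hin : ((i : ℕ) : ℝ) ≤ (n : ℝ) := by
        exact_mod_cast Nat.lt_succ_iff.mp (mem_range.mp hi)
      have hc0 : (0 : ℝ) < c := hc.1
      have hci : c < (i : ℕ) := hc.2
      have h1 : |((i : ℕ) : ℝ)| ≤ (n : ℝ) := by rwa [abs_of_nonneg (by positivity)]
      have h2 : |Real.exp ((i : ℕ) - c)| ≤ Real.exp n := by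
        rw [abs_of_nonneg (Real.exp_nonneg _)]
        apply Real.exp_le_exp.mpr
        linarith
      have h3 : |fR.eval c| ≤ ((n : ℝ) ^ (n + 1)) ^ q :=
        fR_bound hn hq hc0.le (by linarith)
      calc |((i : ℕ) : ℝ)| * |Real.exp ((i : ℕ) - c)| * |fR.eval c|
          ≤ (n : ℝ) * Real.exp (n : ℝ) * (((n : ℝ) ^ (n + 1)) ^ q) := by
            apply mul_le_mul (mul_le_mul h1 h2 (abs_nonneg _) (by positivity)) h3
              (abs_nonneg _) (by positivity)
        _ = (n : ℝ) * Real.exp n * ((n : ℝ) ^ (n + 1)) ^ q := by ring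
  calc |∑ i ∈ range (n + 1), (a i : ℝ) *
        ((sumIDeriv fR).eval ((i : ℕ) : ℝ) - Real.exp 1 ^ i * (sumIDeriv fR).eval 0)|
      ≤ ∑ i ∈ range (n + 1), |(a i : ℝ) *
        ((sumIDeriv fR).eval ((i : ℕ) : ℝ) - Real.exp 1 ^ i * (sumIDeriv fR).eval 0)| :=
        Finset.abs_sum_le_sum_abs _ _
    _ ≤ ∑ i ∈ range (n + 1), |(a i : ℝ)| * ((n : ℝ) * Real.exp n * ((n : ℝ) ^ (n + 1)) ^ q) :=
        Finset.sum_le_sum hterm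
    _ = ((∑ i ∈ range (n + 1), |(a i : ℝ)|) * ((n : ℝ) * Real.exp n)) * ((n : ℝ) ^ (n + 1)) ^ q := by
        rw [← Finset.sum_mul]
        ring



/-- The real number e = exp 1 is transcendental over the rationals. -/
theorem e_transcendental : Transcendental ℚ (Real.exp 1) := by
  intro halg
  have halgZ : IsAlgebraic ℤ (Real.exp 1) := (IsFractionRing.isAlgebraic_iff ℤ ℚ ℝ).mpr halg
  obtain ⟨P, hP0, hPe⟩ := halgZ
  obtain ⟨Q, hQfac, hQnd⟩ := P.exists_eq_pow_rootMultiplicity_mul_and_not_dvd hP0 0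
  have hQe : aeval (Real.exp 1) Q = 0 := by
    rw [hQfac, map_mul] at hPe
    refine (mul_eq_zero.mp hPe).resolve_left ?_
    rw [C_0, sub_zero, map_pow, aeval_X]
    exact pow_ne_zero _ (Real.exp_ne_zero 1)
  have hQ0 : Q.coeff 0 ≠ 0 := by
    intro h
    apply hQnd
    simp only [C_0, sub_zero]
    exact X_dvd_iff.mpr h
  set n := Q.natDegree with hn
  have hn1 : 1 ≤ n := by
    by_contra h
    push_neg at h
    interval_cases n
    · have hQC : Q = C (Q.coeff 0) := eq_C_of_natDegree_eq_zero hn.symm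
      rw [hQC, aeval_C, algebraMap_int_eq, eq_intCast, Int.cast_eq_zero] at hQe
      exact hQ0 hQe
  set a : ℕ → ℤ := fun i => Q.coeff i with ha
  have hev : ∑ i ∈ range (n + 1), (a i : ℝ) * Real.exp 1 ^ i = 0 := by
    have := Polynomial.aeval_eq_sum_range (R := ℤ) (S := ℝ) (p := Q) (Real.exp 1)
    rw [this] at hQe
    rw [← hQe]
    apply Finset.sum_congr rfl
    intro i _
    simp [zsmul_eq_mul, ha]
  set C : ℝ := (∑ i ∈ range (n + 1), |(a i : ℝ)|) * ((n : ℝ) * Real.exp n) with hC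
  set B : ℝ := (n : ℝ) ^ (n + 1) with hB
  have hB1 : 1 ≤ B := one_le_pow₀ (by exact_mod_cast hn1)
  have hCnonneg : 0 ≤ C := by
    apply mul_nonneg (Finset.sum_nonneg fun i _ => abs_nonneg _)
    positivity
  -- find a suitable prime
  have hev' := FloorSemiring.eventually_mul_pow_lt_factorial_sub (K := ℝ) (C + 1) B 1
  obtain ⟨N, hN⟩ := Filter.eventually_atTop.mp hev'
  obtain ⟨q, hqge, hqprime⟩ := Nat.exists_infinite_primes (max (max (n + 1) ((a 0).natAbs + 1)) N)
  have hqn : n < q := lt_of_lt_of_le (Nat.lt_succ_self n) (le_trans (le_max_left _ _) (le_trans (le_max_left _ _) hqge))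
  have hqa : (a 0).natAbs < q := lt_of_lt_of_le (Nat.lt_succ_self _) (le_trans (le_max_right _ _) (le_trans (le_max_left _ _) hqge))
  have hqN : N ≤ q := le_trans (le_max_right _ _) hqge
  have hq1 : 1 ≤ q := hqprime.one_lt.le
  -- lower bound
  have hlow := keyInt n a q hqprime hqn hqa hQ0
  have hup := keyReal n hn1 a q hq1 hev
  have hfac : ((q - 1)! : ℝ) ≤ C * B ^ q := by
    calc ((q - 1)! : ℝ) ≤ |((∑ i ∈ range (n + 1), a i * (sumIDeriv (fpoly n q)).eval (i : ℤ) : ℤ) : ℝ)| := by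
          rw [← Int.cast_abs]
          exact_mod_cast hlow
      _ ≤ C * B ^ q := hup
  have hlt : C * B ^ q < ((q - 1)! : ℝ) := by
    have := hN q hqN
    calc C * B ^ q ≤ (C + 1) * B ^ q := by
          apply mul_le_mul_of_nonneg_right (by linarith) (by positivity)
      _ < ((q - 1)! : ℝ) := this
  linarith
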